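/- Fix n, u, c, m : ℕ and e := u + c. Let N a : Matrix (Fin e) (Fin u) ℝ and C0 : Matrix (Fin c) (Fin e) ℝ be constant matrices, and let M a : Matrix (Fin m) (Fin c) ℝ, for a ∈ Fin (n+1), be constant matrices with M 0 = 0 and (M a) * C0 * (N b) + (M b) * C0 * (N a) = 0 for all a, b. For every twice continuously differentiable φ : (Fin (n+1) → ℝ) → (Fin u → ℝ), setting E x := ∑ b, (N b).mulVec (∂_b φ x) and ψ x := C0.mulVec (E x), the constraints of the constraints hold identically (off-shell): for every x, ∑ i ∈ Finset.univ \ {0}, (M i).mulVec (∂_i ψ x) = 0. -/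

import Mathlib

open Matrix

private lemma aux_mulVec_hasFDerivAt {p q r : ℕ} (A : Matrix (Fin p) (Fin q) ℝ)
    {f : (Fin r → ℝ) → Fin q → ℝ} {x : Fin r → ℝ} (hf : DifferentiableAt ℝ f x) :
    HasFDerivAt (fun y => A.mulVec (f y))
      ((LinearMap.toContinuousLinearMap A.mulVecLin).comp (fderiv ℝ f x)) x := by
  have hL : HasFDerivAt (fun v : Fin q → ℝ => A.mulVec v)
      (LinearMap.toContinuousLinearMap A.mulVecLin) (f x) :=
    (LinearMap.toContinuousLinearMap A.mulVecLin).hasFDerivAt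
  exact hL.comp x hf.hasFDerivAt

/-- Constant-coefficient constraints of the constraints: the extra Geroch fields `M`
give identically vanishing spatial combinations of derivatives of the constraints. -/
theorem stmt_6 (n u c m : ℕ)
    (N : Fin (n + 1) → Matrix (Fin (u + c)) (Fin u) ℝ)
    (C0 : Matrix (Fin c) (Fin (u + c)) ℝ)
    (M : Fin (n + 1) → Matrix (Fin m) (Fin c) ℝ)
    (hM0 : M 0 = 0)
    (hMsym : ∀ a b, M a * C0 * N b + M b * C0 * N a = 0)
    (φ : (Fin (n + 1) → ℝ) → (Fin u → ℝ))
    (hφ : ContDiff ℝ 2 φ)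
    (E : (Fin (n + 1) → ℝ) → (Fin (u + c) → ℝ))
    (hE : ∀ x, E x = ∑ b, (N b).mulVec (fderiv ℝ φ x (Pi.single b 1)))
    (ψ : (Fin (n + 1) → ℝ) → (Fin c → ℝ))
    (hψ : ∀ x, ψ x = C0.mulVec (E x)) :
    ∀ x, ∑ i ∈ Finset.univ \ {0}, (M i).mulVec (fderiv ℝ ψ x (Pi.single i 1)) = 0 := by
  intro x
  have hφ' : ContDiff ℝ 1 (fderiv ℝ φ) := hφ.fderiv_right (by norm_num)
  have hdφ' : ∀ y, DifferentiableAt ℝ (fderiv ℝ φ) y :=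
    fun y => (hφ'.differentiable one_ne_zero) y
  have hg : ∀ (b : Fin (n+1)) y,
      DifferentiableAt ℝ (fun z => fderiv ℝ φ z (Pi.single b 1)) y :=
    fun b y => (hdφ' y).clm_apply (differentiableAt_const _)
  have hgf : ∀ b : Fin (n+1), fderiv ℝ (fun z => fderiv ℝ φ z (Pi.single b 1)) x
      = (fderiv ℝ (fderiv ℝ φ) x).flip (Pi.single b 1) := by
    intro b
    rw [fderiv_clm_apply (hdφ' x) (differentiableAt_const _)]
    simp
  -- rewrite ψ as a finite sum of linear images of first derivatives
  have hψfun : ψ = fun y => ∑ b, (C0 * N b).mulVec (fderiv ℝ φ y (Pi.single b 1)) := by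
    funext y
    rw [hψ, hE, ← Matrix.mulVecLin_apply, map_sum]
    exact Finset.sum_congr rfl fun b _ => by
      simp [Matrix.mulVecLin_apply, Matrix.mulVec_mulVec]
  have hsum : fderiv ℝ ψ x = ∑ b, ((LinearMap.toContinuousLinearMap
      (C0 * N b).mulVecLin).comp
        (fderiv ℝ (fun z => fderiv ℝ φ z (Pi.single b 1)) x)) := by
    rw [hψfun, fderiv_fun_sum fun b _ => (aux_mulVec_hasFDerivAt _ (hg b x)).differentiableAt]
    exact Finset.sum_congr rfl fun b _ => (aux_mulVec_hasFDerivAt _ (hg b x)).fderiv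
  have key : ∀ i : Fin (n+1), (M i).mulVec (fderiv ℝ ψ x (Pi.single i 1))
      = ∑ b, (M i * C0 * N b).mulVec
          (fderiv ℝ (fderiv ℝ φ) x (Pi.single i 1) (Pi.single b 1)) := by
    intro i
    rw [hsum]
    simp only [ContinuousLinearMap.coe_sum', Finset.sum_apply,
      ContinuousLinearMap.coe_comp', Function.comp_apply]
    rw [← Matrix.mulVecLin_apply, map_sum]
    refine Finset.sum_congr rfl fun b _ => ?_
    rw [hgf]
    simp [Matrix.mulVecLin_apply, Matrix.mulVec_mulVec, Matrix.mul_assoc]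
  have hsymm : ∀ i b : Fin (n+1),
      fderiv ℝ (fderiv ℝ φ) x (Pi.single i 1) (Pi.single b 1)
        = fderiv ℝ (fderiv ℝ φ) x (Pi.single b 1) (Pi.single i 1) :=
    fun i b => (hφ.contDiffAt.isSymmSndFDerivAt (by norm_num)) _ _
  -- extend the sum to all indices, using M 0 = 0
  have hext : ∑ i ∈ Finset.univ \ {0}, (M i).mulVec (fderiv ℝ ψ x (Pi.single i 1))
      = ∑ i, ∑ b, (M i * C0 * N b).mulVec
          (fderiv ℝ (fderiv ℝ φ) x (Pi.single i 1) (Pi.single b 1)) := by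
    rw [Finset.sum_congr rfl fun i _ => key i]
    refine Finset.sum_subset (Finset.sdiff_subset) fun i _ hi => ?_
    have : i = 0 := by simpa using hi
    subst this
    simp [hM0, Matrix.zero_mul, Matrix.zero_mulVec]
  rw [hext]
  set T := ∑ i, ∑ b, (M i * C0 * N b).mulVec
      (fderiv ℝ (fderiv ℝ φ) x (Pi.single i 1) (Pi.single b 1)) with hT
  have hswap : T = ∑ i, ∑ b, (M b * C0 * N i).mulVec
      (fderiv ℝ (fderiv ℝ φ) x (Pi.single i 1) (Pi.single b 1)) := by
    rw [hT, Finset.sum_comm]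
    exact Finset.sum_congr rfl fun i _ => Finset.sum_congr rfl fun b _ => by rw [hsymm b i]
  have h2 : T + T = 0 := by
    nth_rewrite 2 [hswap]
    rw [hT, ← Finset.sum_add_distrib]
    refine Finset.sum_eq_zero fun i _ => ?_
    rw [← Finset.sum_add_distrib]
    refine Finset.sum_eq_zero fun b _ => ?_
    rw [← Matrix.add_mulVec, hMsym, Matrix.zero_mulVec]
  funext j
  have h2j := congrFun h2 j
  simp only [Pi.add_apply, Pi.zero_apply] at h2j
  have : T j = 0 := by linarith
  simpa using this
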